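/- Let w be an infinite non-ultimately periodic word, u ∈ Π_γ(w) primitive, h ≥ γ an integer, and φ ∈ Φ_h. Then for every word t ∈ PowFactor(u) of length |u|, the (h+2)-power t^{h+2} is not a factor of the reduced word reduce_{w,u,φ}. -/

import Mathlib

open scoped BigOperators

variable {α : Type*}

/-- The factor of the infinite word `w` (1-indexed) from position `i` to position `j`. -/
def Subword (w : ℕ → α) (i j : ℕ) : List α :=
  (List.range (j + 1 - i)).map fun n => w (i + n)

/-- `t` is a finite factor of the infinite word `w` (positions are 1-indexed). -/
def IsFactorI (w : ℕ → α) (t : List α) : Prop :=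
  ∃ i, 1 ≤ i ∧ t = (List.range t.length).map fun n => w (i + n)

/-- `t` occurs infinitely often in the infinite word `w`. -/
def RecurrentI (w : ℕ → α) (t : List α) : Prop :=
  ∀ N, ∃ i, N ≤ i ∧ t = (List.range t.length).map fun n => w (i + n)

/-- The infinite word `w` is ultimately periodic. -/
def UltimatelyPeriodic (w : ℕ → α) : Prop :=
  ∃ p N, 1 ≤ p ∧ ∀ n, N ≤ n → w (n + p) = w n

/-- The `q`-power `u^q` of a finite word `u`, for a rational exponent `q ≥ 1`:
`u^⌊q⌋` followed by the prefix of `u` of length `(q - ⌊q⌋)·|u|`. -/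
def fracPow (u : List α) (q : ℚ) : List α :=
  (List.replicate ⌊q⌋.toNat u).flatten ++
    u.take (⌊q * (u.length : ℚ)⌋.toNat - ⌊q⌋.toNat * u.length)

/-- A nonempty word is primitive if it is not a (possibly fractional) `q`-power,
`q ≥ 2`, of any word. -/
def Primitive (v : List α) : Prop :=
  v ≠ [] ∧ ∀ (t : List α) (q : ℚ), 2 ≤ q → v ≠ fracPow t q

/-- `PowFactor u`: finite factors of `u^∞` together with finite factors of `(u^R)^∞`. -/
def IsPowFactor (u t : List α) : Prop :=
  (∃ k, t <:+: (List.replicate k u).flatten) ∨ (∃ k, t <:+: (List.replicate k u.reverse).flatten)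

/-- `(i,j)` is a `u`-run of the infinite word `w` (with the fixed parameter `γ`). -/
def IsRun (γ : ℕ) (w : ℕ → α) (u : List α) (i j : ℕ) : Prop :=
  i < j ∧ (γ - 2) * u.length ≤ j - i + 1 ∧ u.length + 1 < i ∧
  IsPowFactor u (Subword w (i - u.length) (j + u.length)) ∧
  ¬ IsPowFactor u (Subword w (i - u.length - 1) (j + u.length)) ∧
  ¬ IsPowFactor u (Subword w (i - u.length) (j + u.length + 1))

/-- Membership in the set `Π_γ(w)`. -/
def InPi (γ : ℕ) (w : ℕ → α) (u : List α) : Prop :=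
  Primitive u ∧ IsFactorI w u ∧
  ¬ IsPowFactor u ((List.range (γ * u.length)).map fun n => w (1 + n)) ∧
  ∃ v : List α, v.length = u.length ∧ IsPowFactor u v ∧
    RecurrentI w ((List.replicate γ v).flatten)

/-- Palindromic length: the minimal number of nonempty palindromes whose
concatenation equals `v`. -/
noncomputable def PL (v : List α) : ℕ :=
  sInf {k | ∃ ps : List (List α), ps.flatten = v ∧ ps.length = k ∧
    ∀ p ∈ ps, p ≠ [] ∧ p.reverse = p}

/-- `maxPL v`: the maximum of `PL` over the factors of `v`. -/
noncomputable def maxPL (v : List α) : ℕ :=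
  sSup {n | ∃ t, t <:+: v ∧ n = PL t}

/-- `(I, J, W, Z, D)` is the run factorization `factrz(w,u)` of `w`:
`(I k, J k)` enumerates the `u`-runs in increasing order, `W k` is the inter-run
factor, and `w[I k, J k] = (Z k)^(D k)`. -/
structure IsFactrz (γ : ℕ) (w : ℕ → α) (u : List α)
    (I J : ℕ → ℕ) (W Z : ℕ → List α) (D : ℕ → ℚ) : Prop where
  run : ∀ k, 1 ≤ k → IsRun γ w u (I k) (J k)
  mono : ∀ k, 1 ≤ k → I k < I (k + 1)
  complete : ∀ i j, IsRun γ w u i j → ∃ k, 1 ≤ k ∧ I k = i ∧ J k = j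
  j0 : J 0 = 0
  wdef : ∀ k, 1 ≤ k → W k = Subword w (J (k - 1) + 1) (I k - 1)
  zlen : ∀ k, 1 ≤ k → (Z k).length = u.length
  zpow : ∀ k, 1 ≤ k → IsPowFactor u (Z k)
  dge : ∀ k, 1 ≤ k → 1 ≤ D k
  zd : ∀ k, 1 ≤ k → Subword w (I k) (J k) = fracPow (Z k) (D k)

/-- Membership in `Φ_h` (with fixed parameter `γ`). -/
def InPhi (γ h : ℕ) (φ : ℚ → ℚ) : Prop :=
  ∀ q : ℚ, 1 ≤ q → ((γ : ℚ) - 2 ≤ φ q ∧ φ q < (h : ℚ) ∧ ∃ n : ℕ, q - φ q = (n : ℚ))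

/-- The finite prefix `W 1 (Z 1)^(E 1) ⋯ W k (Z k)^(E k)` of the reduced word. -/
def redPrefix (W Z : ℕ → List α) (E : ℕ → ℚ) : ℕ → List α
  | 0 => []
  | k + 1 => redPrefix W Z E k ++ W (k + 1) ++ fracPow (Z (k + 1)) (E (k + 1))

/-- `x` is the reduced word `W 1 (Z 1)^(E 1) W 2 (Z 2)^(E 2) ⋯` (1-indexed). -/
def IsReduce (W Z : ℕ → List α) (E : ℕ → ℚ) (x : ℕ → α) : Prop :=
  ∀ k, redPrefix W Z E k = (List.range (redPrefix W Z E k).length).map fun n => x (1 + n)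

/-- Position `i` of `w` is not covered by any `u`-run. -/
def RpoDom (γ : ℕ) (w : ℕ → α) (u : List α) (i : ℕ) : Prop :=
  1 ≤ i ∧ ∀ a b, IsRun γ w u a b → ¬ (a ≤ i ∧ i ≤ b)

/-- `κ(j) = Σ_{i ≤ j} (|W i| + |(Z i)^(D i)|)`, the end position of the `j`-th run. -/
def kappa (W Z : ℕ → List α) (D : ℕ → ℚ) (j : ℕ) : ℕ :=
  ∑ i ∈ Finset.Icc 1 j, ((W i).length + (fracPow (Z i) (D i)).length)

/-- The graph of the position bijection `rpo`: position `i` of `w` (with exponent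
sequence `D`) corresponds to position `ib` of the reduced word (exponents `E`). -/
def RpoRel (W Z : ℕ → List α) (D E : ℕ → ℚ) (i ib : ℕ) : Prop :=
  ∃ j, kappa W Z D j < i ∧ i ≤ kappa W Z D (j + 1) ∧
    ib = kappa W Z E j + (i - kappa W Z D j)

/-- There are at most `N` `u`-runs entirely contained in `[a,b]`. -/
def RunCountLe (γ : ℕ) (w : ℕ → α) (u : List α) (a b N : ℕ) : Prop :=
  ∀ S : Finset (ℕ × ℕ), (∀ p ∈ S, IsRun γ w u p.1 p.2 ∧ a ≤ p.1 ∧ p.2 ≤ b) → S.card ≤ N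

/-- `(i,j)` is a standard palindrome of `w` with respect to `u`. -/
def IsStdPal (γ : ℕ) (w : ℕ → α) (u : List α) (i j : ℕ) : Prop :=
  i ≤ j ∧ RpoDom γ w u i ∧ RpoDom γ w u j ∧
  (Subword w (i - 1) (j + 1)).reverse = Subword w (i - 1) (j + 1) ∧
  (∀ m, i - 1 ≤ m → m ≤ min (i + u.length - 1) j → RpoDom γ w u m) ∧
  (∀ m, max (j + 1 - u.length) i ≤ m → m ≤ j + 1 → RpoDom γ w u m) ∧
  (∀ m, i ≤ m → m ≤ j → (RpoDom γ w u m ↔ RpoDom γ w u (i + j - m)))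

/-- `(m1,m2)` is a centered standard palindrome of `w[i,j]`. -/
def IsCnStdPal (γ : ℕ) (w : ℕ → α) (u : List α) (i j m1 m2 : ℕ) : Prop :=
  IsStdPal γ w u m1 m2 ∧ i ≤ m1 ∧ m2 ≤ j ∧ m1 - i = j - m2

section AuxLemmas
variable {α : Type*}

lemma sub_len (w : ℕ → α) (a b : ℕ) : (Subword w a b).length = b + 1 - a := by
  simp [Subword]

lemma sub_get (w : ℕ → α) {a b r : ℕ} (h : r < b + 1 - a) :
    (Subword w a b)[r]? = some (w (a + r)) := by
  simp [Subword, List.getElem?_map, List.getElem?_range, h]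

lemma sub_none (w : ℕ → α) {a b r : ℕ} (h : b + 1 - a ≤ r) :
    (Subword w a b)[r]? = none := by
  apply List.getElem?_eq_none
  rwa [sub_len]

lemma sub_append (w : ℕ → α) {a b c : ℕ} (h1 : a ≤ b + 1) (h2 : b ≤ c) :
    Subword w a b ++ Subword w (b+1) c = Subword w a c := by
  apply List.ext_getElem?
  intro n
  rw [List.getElem?_append, sub_len]
  by_cases hn : n < b + 1 - a
  · rw [if_pos hn, sub_get w hn, sub_get w (show n < c + 1 - a by omega)]
  · rw [if_neg hn]
    by_cases hn2 : n < c + 1 - a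
    · rw [sub_get w (show n - (b + 1 - a) < c + 1 - (b+1) by omega), sub_get w hn2]
      congr 2
      omega
    · rw [sub_none w (by omega), sub_none w (by omega)]

lemma sub_take (w : ℕ → α) {a b l : ℕ} (h1 : 1 ≤ l) (h2 : l ≤ b + 1 - a) :
    (Subword w a b).take l = Subword w a (a + l - 1) := by
  apply List.ext_getElem?
  intro n
  rw [List.getElem?_take]
  by_cases hn : n < l
  · rw [if_pos hn, sub_get w (show n < b + 1 - a by omega),
      sub_get w (show n < (a + l - 1) + 1 - a by omega)]
  · rw [if_neg hn, sub_none w (by omega)]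

lemma infix_drop_take (s : List α) (d n : ℕ) : (s.drop d).take n <:+: s :=
  ((s.drop d).take_prefix n).isInfix.trans (s.drop_suffix d).isInfix

lemma pf_infix {u s t : List α} (h : t <:+: s) (hs : IsPowFactor u s) : IsPowFactor u t := by
  rcases hs with ⟨k, hk⟩ | ⟨k, hk⟩
  · exact Or.inl ⟨k, h.trans hk⟩
  · exact Or.inr ⟨k, h.trans hk⟩

def Br (u y : List α) : Prop := y = u ∨ y = u.reverse

lemma Br.len {u y : List α} (h : Br u y) : y.length = u.length := by
  rcases h with rfl | rfl
  · rfl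
  · simp

lemma join_rep_len (v : List α) (K : ℕ) : ((List.replicate K v).flatten).length = K * v.length := by
  induction K with
  | zero => simp
  | succ K ih =>
    have hs : (List.replicate (K+1) v).flatten = v ++ (List.replicate K v).flatten := by
      simp [List.replicate_succ]
    rw [hs, List.length_append, ih, Nat.succ_mul]
    ring

lemma join_rep_get {v : List α} {K m : ℕ} (hv : 0 < v.length) (hm : m < K * v.length) :
    ((List.replicate K v).flatten)[m]? = v[m % v.length]? := by
  induction K generalizing m with
  | zero => simp at hm
  | succ K ih =>
    have hs : (List.replicate (K+1) v).flatten = v ++ (List.replicate K v).flatten := by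
      simp [List.replicate_succ]
    rw [hs, List.getElem?_append]
    by_cases h : m < v.length
    · rw [if_pos h, Nat.mod_eq_of_lt h]
    · rw [if_neg h, ih (show m - v.length < K * v.length by
        rw [Nat.succ_mul] at hm; omega)]
      rw [Nat.mod_eq_sub_mod (le_of_not_gt h)]

end AuxLemmas

section AuxLemmas2
variable {α : Type*}

def Ali (y s : List α) : Prop := ∃ o : ℕ, ∀ r, r < s.length → s[r]? = y[(o + r) % y.length]?

lemma infix_off {s t : List α} (h : t <:+: s) :
    ∃ d, d + t.length ≤ s.length ∧ ∀ r, r < t.length → t[r]? = s[d + r]? := by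
  obtain ⟨l1, l2, heq⟩ := h
  refine ⟨l1.length, by rw [← heq, List.length_append, List.length_append]; omega, fun r hr => ?_⟩
  rw [← heq, List.append_assoc, List.getElem?_append, if_neg (by omega)]
  rw [show l1.length + r - l1.length = r by omega, List.getElem?_append, if_pos hr]

lemma ali_of_pf {u s : List α} (hu : u ≠ []) (h : IsPowFactor u s) :
    ∃ y, Br u y ∧ Ali y s := by
  have hp : 0 < u.length := List.length_pos_iff.2 hu
  rcases h with ⟨K, hK⟩ | ⟨K, hK⟩
  · refine ⟨u, Or.inl rfl, ?_⟩
    obtain ⟨d, hd, hget⟩ := infix_off hK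
    rw [join_rep_len] at hd
    exact ⟨d, fun r hr => by
      rw [hget r hr, join_rep_get hp (show d + r < K * u.length by omega)]⟩
  · refine ⟨u.reverse, Or.inr rfl, ?_⟩
    have hp' : 0 < u.reverse.length := by simpa using hp
    obtain ⟨d, hd, hget⟩ := infix_off hK
    rw [join_rep_len] at hd
    exact ⟨d, fun r hr => by
      rw [hget r hr, join_rep_get hp' (show d + r < K * u.reverse.length by omega)]⟩

lemma pf_of_ali {u y s : List α} (hb : Br u y) (hu : u ≠ []) (h : Ali y s) :
    IsPowFactor u s := by
  have hp : 0 < y.length := by rw [hb.len]; exact List.length_pos_iff.2 hu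
  obtain ⟨o, ho⟩ := h
  set K := o % y.length + s.length + 1 with hK
  have hKp : K ≤ K * y.length := Nat.le_mul_of_pos_right K hp
  have key : s = (((List.replicate K y).flatten).drop (o % y.length)).take s.length := by
    apply List.ext_getElem?
    intro r
    rw [List.getElem?_take]
    by_cases hr : r < s.length
    · rw [if_pos hr, List.getElem?_drop,
        join_rep_get hp (show o % y.length + r < K * y.length by
          have := Nat.mod_lt o hp; omega),
        ho r hr, Nat.mod_add_mod]
    · rw [if_neg hr, List.getElem?_eq_none (by omega)]
  rcases hb with rfl | rfl
  · exact Or.inl ⟨K, by rw [key]; exact infix_drop_take _ _ _⟩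
  · exact Or.inr ⟨K, by rw [key]; exact infix_drop_take _ _ _⟩

def AliF (w : ℕ → α) (y : List α) (a b : ℕ) : Prop :=
  ∃ o : ℕ, ∀ n, a ≤ n → n ≤ b → y[(o + (n - a)) % y.length]? = some (w n)

lemma aliF_of_pw {w : ℕ → α} {u : List α} (hu : u ≠ []) {a b : ℕ}
    (h : IsPowFactor u (Subword w a b)) : ∃ y, Br u y ∧ AliF w y a b := by
  obtain ⟨y, hb, o, ho⟩ := ali_of_pf hu h
  refine ⟨y, hb, o, fun n h1 h2 => ?_⟩
  have h3 := ho (n - a) (by rw [sub_len]; omega)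
  rw [sub_get w (by omega)] at h3
  rw [← h3, Nat.add_sub_cancel' h1]

lemma pw_of_aliF {w : ℕ → α} {u y : List α} (hb : Br u y) (hu : u ≠ []) {a b : ℕ}
    (h : AliF w y a b) : IsPowFactor u (Subword w a b) := by
  apply pf_of_ali hb hu
  obtain ⟨o, ho⟩ := h
  refine ⟨o, fun r hr => ?_⟩
  rw [sub_len] at hr
  have h3 := ho (a + r) (by omega) (by omega)
  rw [show a + r - a = r by omega] at h3
  rw [sub_get w hr, h3]

lemma aliF_merge {w : ℕ → α} {y y' : List α} {a b c d : ℕ}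
    (hyy : y'.length = y.length) (hp : 0 < y.length)
    (h1 : AliF w y a b) (h2 : AliF w y' c d)
    (hac : a ≤ c) (hcb : c + y.length ≤ b + 1) (hbd : b ≤ d) :
    AliF w y a d := by
  set p := y.length with hpd
  obtain ⟨o, ho⟩ := h1
  obtain ⟨o', ho'⟩ := h2
  refine ⟨o, fun n h1n h2n => ?_⟩
  rcases le_or_gt n b with hnb | hnb
  · exact ho n h1n hnb
  · have key : ∀ r, y[(o + (c - a) + r) % p]? = y'[(o' + r) % p]? := by
      intro r
      induction r using Nat.strong_induction_on with
      | _ r ih =>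
        rcases lt_or_ge r p with hr | hr
        · have e1 := ho (c + r) (by omega) (by omega)
          have e2 := ho' (c + r) (by omega) (by omega)
          rw [show c + r - a = c - a + r by omega, ← Nat.add_assoc] at e1
          rw [show c + r - c = r by omega] at e2
          rw [hyy] at e2
          rw [e1, e2]
        · have e1 : (o + (c - a) + r) % p = (o + (c - a) + (r - p)) % p := by
            conv_lhs => rw [show o + (c - a) + r = (o + (c - a) + (r - p)) + p by omega]
            rw [Nat.add_mod_right]
          have e2 : (o' + r) % p = (o' + (r - p)) % p := by
            conv_lhs => rw [show o' + r = (o' + (r - p)) + p by omega]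
            rw [Nat.add_mod_right]
          rw [e1, e2, ih (r - p) (by omega)]
    have e3 := key (n - c)
    rw [show o + (c - a) + (n - c) = o + (n - a) by omega] at e3
    have e4 := ho' n (by omega) h2n
    rw [hyy] at e4
    exact e3.trans e4

lemma per_of_aliF {w : ℕ → α} {y : List α} {a b : ℕ} (h : AliF w y a b) {n : ℕ}
    (h1 : a ≤ n) (h2 : n + y.length ≤ b) : w (n + y.length) = w n := by
  obtain ⟨o, ho⟩ := h
  have e1 := ho n h1 (by omega)
  have e2 := ho (n + y.length) (by omega) h2
  rw [show n + y.length - a = (n - a) + y.length by omega, ← Nat.add_assoc,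
    Nat.add_mod_right] at e2
  have := e2.symm.trans e1
  exact Option.some_inj.1 this

lemma pw_mono {w : ℕ → α} {u : List α} {a b a' b' : ℕ} (h : IsPowFactor u (Subword w a b))
    (ha : a ≤ a') (hb : b' ≤ b) : IsPowFactor u (Subword w a' b') := by
  apply pf_infix _ h
  have heq : Subword w a' b' = ((Subword w a b).drop (a' - a)).take (b' + 1 - a') := by
    apply List.ext_getElem?
    intro r
    rw [List.getElem?_take]
    by_cases hr : r < b' + 1 - a'
    · rw [if_pos hr, List.getElem?_drop, sub_get w hr,
        sub_get w (show a' - a + r < b + 1 - a by omega)]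
      congr 2
      omega
    · rw [if_neg hr, sub_none w (by omega)]
  rw [heq]
  exact infix_drop_take _ _ _

lemma run_no_right {γ : ℕ} {w : ℕ → α} {u : List α} {i j : ℕ} (hune : u ≠ [])
    (hr : IsRun γ w u i j) :
    ¬ IsPowFactor u (Subword w (j + 1) (j + u.length + 1)) := by
  intro hpw
  have hp : 0 < u.length := List.length_pos_iff.2 hune
  obtain ⟨hij, _, hi, hstr, hnl, hnr⟩ := hr
  obtain ⟨y, hy, hF⟩ := aliF_of_pw hune hstr
  obtain ⟨y', hy', hF'⟩ := aliF_of_pw hune hpw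
  have hm := aliF_merge (by rw [hy'.len, hy.len]) (by rw [hy.len]; exact hp) hF hF'
    (by omega) (by rw [hy.len]; omega) (by omega)
  exact hnr (pw_of_aliF hy hune hm)

lemma run_no_left {γ : ℕ} {w : ℕ → α} {u : List α} {i j : ℕ} (hune : u ≠ [])
    (hr : IsRun γ w u i j) :
    ¬ IsPowFactor u (Subword w (i - u.length - 1) (i - 1)) := by
  intro hpw
  have hp : 0 < u.length := List.length_pos_iff.2 hune
  obtain ⟨hij, _, hi, hstr, hnl, hnr⟩ := hr
  obtain ⟨y, hy, hF⟩ := aliF_of_pw hune hstr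
  obtain ⟨y', hy', hF'⟩ := aliF_of_pw hune hpw
  have hm := aliF_merge (by rw [hy.len, hy'.len]) (by rw [hy'.len]; exact hp) hF' hF
    (by omega) (by rw [hy'.len]; omega) (by omega)
  exact hnl (pw_of_aliF hy' hune hm)

end AuxLemmas2

section AuxLemmas3
variable {α : Type*}

lemma fracPow_len {z : List α} {q : ℚ} (hq : 1 ≤ q) :
    (fracPow z q).length = (⌊q * (z.length : ℚ)⌋).toNat := by
  rcases Nat.eq_zero_or_pos z.length with h0 | hp
  · rw [List.length_eq_zero_iff.1 h0]
    simp [fracPow]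
  · unfold fracPow
    rw [List.length_append, List.length_take, join_rep_len]
    have hfl : 1 ≤ ⌊q⌋ := Int.le_floor.2 (by exact_mod_cast hq)
    have h2 : (⌊q⌋.toNat : ℤ) * z.length ≤ ⌊q * z.length⌋ := by
      rw [Int.le_floor]
      push_cast [Int.toNat_of_nonneg (by omega : (0:ℤ) ≤ ⌊q⌋)]
      exact mul_le_mul_of_nonneg_right (Int.floor_le q) (by positivity)
    have h3 : ⌊q * z.length⌋ < ((⌊q⌋.toNat : ℤ) + 1) * z.length := by
      rw [Int.floor_lt]
      push_cast [Int.toNat_of_nonneg (by omega : (0:ℤ) ≤ ⌊q⌋)]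
      exact mul_lt_mul_of_pos_right (Int.lt_floor_add_one q) (by exact_mod_cast hp)
    have h2' : ⌊q⌋.toNat * z.length ≤ ⌊q * z.length⌋.toNat := by omega
    have h3' : ⌊q * z.length⌋.toNat < (⌊q⌋.toNat + 1) * z.length := by
      have hd : ((⌊q⌋.toNat + 1) * z.length : ℤ) = ((⌊q⌋.toNat + 1) * z.length : ℕ) := by
        push_cast; ring
      omega
    rw [Nat.add_mul, one_mul] at h3'
    omega

lemma fracPow_prefix {z : List α} {e : ℚ} (he : 1 ≤ e) (n : ℕ) :
    fracPow z e <+: fracPow z (e + n) := by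
  have h1 : ⌊e + (n:ℚ)⌋ = ⌊e⌋ + n := by
    rw [Int.floor_add_natCast]
  have h2 : ⌊(e + n) * (z.length:ℚ)⌋ = ⌊e * z.length⌋ + n * z.length := by
    rw [add_mul]
    rw [show ((n:ℚ) * z.length) = ((n * z.length : ℤ) : ℚ) by push_cast; ring]
    rw [Int.floor_add_intCast]
  have hfl : 1 ≤ ⌊e⌋ := Int.le_floor.2 (by exact_mod_cast he)
  have hB : ⌊e + (n:ℚ)⌋.toNat = ⌊e⌋.toNat + n := by omega
  have hA : ⌊(e + n) * (z.length:ℚ)⌋.toNat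
      = ⌊e * (z.length:ℚ)⌋.toNat + n * z.length := by
    have h4 : (0:ℤ) ≤ ⌊e * (z.length:ℚ)⌋ := by
      apply Int.le_floor.2
      push_cast
      positivity
    have hd : ((n * z.length : ℕ) : ℤ) = (n : ℤ) * z.length := by push_cast; ring
    omega
  have htk : ⌊(e + n) * (z.length:ℚ)⌋.toNat - ⌊e + (n:ℚ)⌋.toNat * z.length
      = ⌊e * (z.length:ℚ)⌋.toNat - ⌊e⌋.toNat * z.length := by
    rw [hA, hB, Nat.add_mul]
    omega
  unfold fracPow
  rw [htk, hB, List.replicate_add, List.flatten_append]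
  set A := (List.replicate ⌊e⌋.toNat z).flatten
  set R := ⌊e * (z.length:ℚ)⌋.toNat - ⌊e⌋.toNat * z.length
  rcases Nat.eq_zero_or_pos n with h | h
  · simp [h]
  · rw [show n = 1 + (n - 1) by omega, List.replicate_add, List.flatten_append]
    refine ⟨z.drop R ++ ((List.replicate (n-1) z).flatten ++ z.take R), ?_⟩
    simp only [List.append_assoc, List.replicate_one, List.flatten_cons,
      List.flatten_nil, List.append_nil]
    congr 1
    rw [← List.append_assoc, List.take_append_drop]

end AuxLemmas3

/-- the reduced word contains no `(h+2)`-power of any conjugate of `u`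
or of `u.reverse`. -/
theorem reduced_word_power_free {α : Type*} (γ h : ℕ) (hγ : 3 ≤ γ) (hh : γ ≤ h)
    (w : ℕ → α) (u : List α) (hw : ¬ UltimatelyPeriodic w) (hu : InPi γ w u)
    (φ : ℚ → ℚ) (hφ : InPhi γ h φ)
    (I J : ℕ → ℕ) (W Z : ℕ → List α) (D : ℕ → ℚ)
    (hf : IsFactrz γ w u I J W Z D)
    (xb : ℕ → α) (hred : IsReduce W Z (fun k => φ (D k)) xb) :
    ∀ t : List α, t.length = u.length → IsPowFactor u t →
      ¬ IsFactorI xb ((List.replicate (h + 2) t).flatten) := by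
  classical
  -- first: γ = 3 is forced by `InPhi`
  have hγ3 : γ = 3 := by
    obtain ⟨hge, hlt, n, hn⟩ := hφ 1 le_rfl
    have h1 : φ 1 ≤ 1 := by
      have : (0:ℚ) ≤ (n:ℚ) := by positivity
      linarith
    have h2 : (γ:ℚ) ≤ 3 := by linarith
    have h3 : γ ≤ 3 := by exact_mod_cast h2
    omega
  subst hγ3
  intro t htlen htpf hocc
  obtain ⟨i, hi1, hT⟩ := hocc
  have hune : u ≠ [] := hu.1.1
  have hp : 0 < u.length := List.length_pos_iff.2 hune
  have hhp : 3 * u.length ≤ h * u.length := Nat.mul_le_mul_right _ hh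
  have hN : (h+2) * u.length = h * u.length + 2 * u.length := by ring
  have hrun : ∀ k, 1 ≤ k → IsRun 3 w u (I k) (J k) := hf.run
  -- facts about the exponents
  have hEq : ∀ k, 1 ≤ k → 1 ≤ φ (D k) ∧ φ (D k) < h ∧ ∃ n : ℕ, D k = φ (D k) + n := by
    intro k hk
    obtain ⟨h1, h2, n, h3⟩ := hφ (D k) (hf.dge k hk)
    refine ⟨by push_cast at h1; linarith, h2, n, by linarith⟩
  -- facts about the reduced blocks B k = fracPow (Z k) (φ (D k))
  have hBp : ∀ k, 1 ≤ k → u.length ≤ (fracPow (Z k) (φ (D k))).length := by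
    intro k hk
    rw [fracPow_len (hEq k hk).1, hf.zlen k hk]
    have h2 : (u.length : ℤ) ≤ ⌊φ (D k) * (u.length : ℚ)⌋ := by
      apply Int.le_floor.2
      push_cast
      nlinarith [(hEq k hk).1, (show (0:ℚ) ≤ (u.length:ℚ) by positivity)]
    omega
  have hBh : ∀ k, 1 ≤ k → (fracPow (Z k) (φ (D k))).length + 1 ≤ h * u.length := by
    intro k hk
    rw [fracPow_len (hEq k hk).1, hf.zlen k hk]
    have h2 : ⌊φ (D k) * (u.length : ℚ)⌋ < ((h * u.length : ℕ) : ℤ) := by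
      apply Int.floor_lt.2
      push_cast
      have := (hEq k hk).2.1
      have hq : (0:ℚ) < (u.length:ℚ) := by exact_mod_cast hp
      nlinarith
    omega
  have hBJ : ∀ k, 1 ≤ k → (fracPow (Z k) (φ (D k))).length ≤ J k + 1 - I k := by
    intro k hk
    obtain ⟨n, hn⟩ := (hEq k hk).2.2
    have hpre := fracPow_prefix (z := Z k) (hEq k hk).1 n
    rw [← hn] at hpre
    have := hpre.length_le
    rw [← hf.zd k hk, sub_len] at this
    exact this
  have hBtake : ∀ k, 1 ≤ k →
      fracPow (Z k) (φ (D k)) = Subword w (I k) (I k + (fracPow (Z k) (φ (D k))).length - 1) := by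
    intro k hk
    obtain ⟨n, hn⟩ := (hEq k hk).2.2
    have hpre := fracPow_prefix (z := Z k) (hEq k hk).1 n
    rw [← hn] at hpre
    have h1 := List.prefix_iff_eq_take.1 hpre
    rw [← hf.zd k hk] at h1
    conv_lhs => rw [h1]
    rw [sub_take w (by have := hBp k hk; omega) (hBJ k hk)]
  -- separation of consecutive runs
  have hsep : ∀ k, 1 ≤ k → J k + u.length + 2 ≤ I (k+1) := by
    intro k hk
    have r1 := hrun k hk
    have r2 := hrun (k+1) (by omega)
    have hIlt := hf.mono k hk
    by_contra hcon
    push_neg at hcon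
    have hJlt : J k < J (k+1) := by
      by_contra hc2
      push_neg at hc2
      rcases eq_or_lt_of_le hc2 with he | hl
      · exact r2.2.2.2.2.1 (pw_mono r1.2.2.2.1
          (by have := r1.2.2.1; omega) (by omega))
      · exact r2.2.2.2.2.2 (pw_mono r1.2.2.2.1
          (by have := r1.2.2.1; have := r2.2.2.1; omega) (by omega))
    have hwin : IsPowFactor u (Subword w (J k + 1) (J k + u.length + 1)) :=
      pw_mono r2.2.2.2.1 (by have := r2.2.2.1; omega) (by omega)
    exact run_no_right hune r1 hwin
  have hJI : ∀ k, J k + 1 ≤ I (k+1) := by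
    intro k
    cases k with
    | zero =>
      have h1 := (hrun 1 le_rfl).2.2.1
      simp only [hf.j0, Nat.zero_add]
      omega
    | succ k => have := hsep (k+1) (by omega); omega
  have hImono : ∀ m k, 1 ≤ m → m ≤ k → I m ≤ I k := by
    intro m k hm hmk
    induction k with
    | zero => omega
    | succ k ih =>
      rcases Nat.eq_or_lt_of_le hmk with he | hl
      · exact le_of_eq (congrArg I he)
      · exact le_trans (ih (by omega)) (le_of_lt (hf.mono k (by omega)))
  have hJmono : ∀ m k, 1 ≤ m → m ≤ k → J m ≤ J k := by
    intro m k hm hmk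
    induction k with
    | zero => omega
    | succ k ih =>
      rcases Nat.eq_or_lt_of_le hmk with he | hl
      · exact le_of_eq (congrArg J he)
      · have h1 := hJI k
        have h2 := (hrun (k+1) (by omega)).1
        exact le_trans (ih (by omega)) (by omega)
  have hWlen : ∀ k, (W (k+1)).length = I (k+1) - 1 - J k := by
    intro k
    have := hf.wdef (k+1) (by omega)
    simp only [Nat.add_sub_cancel] at this
    rw [this, sub_len]
    have := hJI k
    omega
  have hWp : ∀ k, u.length + 1 ≤ (W (k+1)).length := by
    intro k
    rw [hWlen k]
    cases k with
    | zero =>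
      have h1 := (hrun 1 le_rfl).2.2.1
      simp only [hf.j0, Nat.zero_add]
      omega
    | succ k => have := hsep (k+1) (by omega); omega
  have hSW : ∀ k, W (k+1) ++ fracPow (Z (k+1)) (φ (D (k+1)))
      = Subword w (J k + 1)
        (I (k+1) - 1 + (fracPow (Z (k+1)) (φ (D (k+1)))).length) := by
    intro k
    have hwd := hf.wdef (k+1) (by omega)
    simp only [Nat.add_sub_cancel] at hwd
    have hIk1 : 1 ≤ I (k+1) := by have := (hrun (k+1) (by omega)).2.2.1; omega
    have e1 : I (k+1) - 1 + 1 = I (k+1) := by omega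
    have happ := sub_append w (a := J k + 1) (b := I (k+1) - 1)
      (c := I (k+1) - 1 + (fracPow (Z (k+1)) (φ (D (k+1)))).length)
      (by have := hJI k; omega) (by omega)
    rw [e1] at happ
    have e2 : I (k+1) + (fracPow (Z (k+1)) (φ (D (k+1)))).length - 1
        = I (k+1) - 1 + (fracPow (Z (k+1)) (φ (D (k+1)))).length := by
      have := hBp (k+1) (by omega)
      omega
    rw [hwd]
    conv_lhs => rw [hBtake (k+1) (by omega)]
    rw [e2]
    exact happ
  -- the length function of the reduced prefixes
  obtain ⟨L, hL0, hLrec, hLlen, hredL⟩ :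
      ∃ L : ℕ → ℕ, L 0 = 0 ∧
        (∀ k, L (k+1) = L k + ((W (k+1)).length + (fracPow (Z (k+1)) (φ (D (k+1)))).length)) ∧
        (∀ k, (redPrefix W Z (fun j => φ (D j)) k).length = L k) ∧
        (∀ k, redPrefix W Z (fun j => φ (D j)) k = (List.range (L k)).map fun n => xb (1 + n)) := by
    refine ⟨fun k => (redPrefix W Z (fun j => φ (D j)) k).length, rfl, fun k => ?_,
      fun k => rfl, fun k => hred k⟩
    simp [redPrefix, Nat.add_assoc]
  have hLstep : ∀ k, L k + (2 * u.length + 1) ≤ L (k+1) := by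
    intro k
    have h1 := hWp k
    have h2 := hBp (k+1) (by omega)
    rw [hLrec k]
    omega
  have hLmono : ∀ m k, m ≤ k → L m ≤ L k := by
    intro m k hmk
    induction k with
    | zero => exact le_of_eq (congrArg L (Nat.le_zero.1 hmk))
    | succ k ih =>
      rcases Nat.eq_or_lt_of_le hmk with he | hl
      · exact le_of_eq (congrArg L he)
      · exact le_trans (ih (by omega)) (by have := hLstep k; omega)
  have hLlb : ∀ k, k ≤ L k := by
    intro k
    induction k with
    | zero => omega
    | succ k ih => have := hLstep k; omega
  -- position correspondence between xb and w
  have hXW : ∀ k r, 1 ≤ r →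
      r ≤ (W (k+1)).length + (fracPow (Z (k+1)) (φ (D (k+1)))).length →
      xb (L k + r) = w (J k + r) := by
    intro k r hr1 hr2
    have hsplit : redPrefix W Z (fun j => φ (D j)) (k+1)
        = redPrefix W Z (fun j => φ (D j)) k
          ++ (W (k+1) ++ fracPow (Z (k+1)) (φ (D (k+1)))) := by
      simp [redPrefix, List.append_assoc]
    have e1 : (redPrefix W Z (fun j => φ (D j)) (k+1))[L k + r - 1]?
        = some (xb (1 + (L k + r - 1))) := by
      rw [hredL (k+1), List.getElem?_map, List.getElem?_range
        (by rw [hLrec k]; omega)]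
      rfl
    have e2 : (redPrefix W Z (fun j => φ (D j)) (k+1))[L k + r - 1]?
        = some (w (J k + r)) := by
      rw [hsplit, List.getElem?_append, if_neg (by rw [hLlen k]; omega), hLlen k,
        show L k + r - 1 - L k = r - 1 by omega, hSW k,
        sub_get w (show r - 1 < (I (k+1) - 1 + (fracPow (Z (k+1)) (φ (D (k+1)))).length) + 1 - (J k + 1) by
          have := hWlen k; have := hJI k; have := hWp k; omega)]
      rw [show J k + 1 + (r - 1) = J k + r by omega]
    have := e1.symm.trans e2
    have h3 := Option.some_inj.1 this
    rwa [show 1 + (L k + r - 1) = L k + r by omega] at h3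
  -- the big power T
  have hTlen : ((List.replicate (h + 2) t).flatten).length = (h+2) * u.length := by
    rw [join_rep_len, htlen]
  have ht0 : 0 < t.length := by rw [htlen]; exact hp
  have hTpow : IsPowFactor u ((List.replicate (h + 2) t).flatten) := by
    obtain ⟨y, hy, o, ho⟩ := ali_of_pf hune htpf
    apply pf_of_ali hy hune
    refine ⟨o, fun r hr => ?_⟩
    rw [hTlen, ← htlen] at hr
    rw [join_rep_get ht0 hr, ho (r % t.length) (Nat.mod_lt _ ht0)]
    congr 1
    rw [show t.length = y.length by rw [htlen, hy.len]]
    exact Nat.add_mod_mod o r y.length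
  have hTget : ∀ r, r < (h+2) * u.length →
      ((List.replicate (h + 2) t).flatten)[r]? = some (xb (i + r)) := by
    intro r hr
    conv_lhs => rw [hT]
    rw [List.getElem?_map, List.getElem?_range (by rw [hTlen]; exact hr)]
    rfl
  -- extraction: any block of the occurrence lying inside one segment is a pow factor of w
  have EXT : ∀ m x l, 1 ≤ l → L m < x → x + l ≤ L (m+1) + 1 → i ≤ x →
      x + l ≤ i + (h+2) * u.length →
      IsPowFactor u (Subword w (J m + (x - L m)) (J m + (x - L m) + l - 1)) := by
    intro m x l hl hLx hxR hix hend
    apply pf_infix _ hTpow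
    have heq : Subword w (J m + (x - L m)) (J m + (x - L m) + l - 1)
        = (((List.replicate (h + 2) t).flatten).drop (x - i)).take l := by
      apply List.ext_getElem?
      intro r
      rw [List.getElem?_take]
      by_cases hr : r < l
      · rw [if_pos hr, List.getElem?_drop,
          sub_get w (show r < (J m + (x - L m) + l - 1) + 1 - (J m + (x - L m)) by omega),
          hTget (x - i + r) (by omega)]
        have e : xb (i + (x - i + r)) = w (J m + (x - L m) + r) := by
          rw [show i + (x - i + r) = L m + ((x - L m) + r) by omega,
            hXW m ((x - L m) + r) (by omega)
              (by have := hLrec m; omega),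
            show J m + ((x - L m) + r) = J m + (x - L m) + r by omega]
        rw [e]
      · rw [if_neg hr, sub_none w (by omega)]
    rw [heq]
    exact infix_drop_take _ _ _
  -- prefix contradiction
  have hpre : ∀ eP, 3 * u.length ≤ eP → IsPowFactor u (Subword w 1 eP) → False := by
    intro eP heP hppw
    apply hu.2.2.1
    have h1 : Subword w 1 (3 * u.length) = (List.range (3 * u.length)).map fun n => w (1 + n) := by
      unfold Subword
      norm_num
    rw [← h1]
    exact pw_mono hppw le_rfl heP
  -- construction of a maximal run around a long pow factor
  have CONSTR : ∀ s e, 1 ≤ s → s + 3 * u.length ≤ e → IsPowFactor u (Subword w s e) →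
      ∃ m, 1 ≤ m ∧ I m ≤ s + u.length ∧ e ≤ J m + u.length := by
    intro s e hs1 hse hpw
    have hex : ∃ d, ¬ IsPowFactor u (Subword w s (e + d + 1)) := by
      by_contra hall
      push_neg at hall
      apply hw
      refine ⟨u.length, s, hp, fun n hn => ?_⟩
      have hcov := hall (n + u.length - e)
      obtain ⟨y, hy, hF⟩ := aliF_of_pw hune hcov
      have hper := per_of_aliF hF (show s ≤ n from hn)
        (show n + y.length ≤ e + (n + u.length - e) + 1 by rw [hy.len]; omega)
      rwa [hy.len] at hper
    have hnotE : ¬ IsPowFactor u (Subword w s (e + Nat.find hex + 1)) := Nat.find_spec hex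
    have hPwE : IsPowFactor u (Subword w s (e + Nat.find hex)) := by
      rcases Nat.eq_zero_or_pos (Nat.find hex) with h0 | h0
      · rw [h0]; simpa using hpw
      · have := Nat.find_min hex (show Nat.find hex - 1 < Nat.find hex by omega)
        rw [not_not, show e + (Nat.find hex - 1) + 1 = e + Nat.find hex by omega] at this
        exact this
    have hex2 : ∃ d, s - (d+1) = 0 ∨ ¬ IsPowFactor u (Subword w (s - (d+1)) (e + Nat.find hex)) :=
      ⟨s - 1, Or.inl (by omega)⟩
    have hPwS : IsPowFactor u (Subword w (s - Nat.find hex2) (e + Nat.find hex)) ∧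
        1 ≤ s - Nat.find hex2 := by
      rcases Nat.eq_zero_or_pos (Nat.find hex2) with h0 | h0
      · rw [h0]; exact ⟨by simpa using hPwE, by omega⟩
      · have := Nat.find_min hex2 (show Nat.find hex2 - 1 < Nat.find hex2 by omega)
        push_neg at this
        obtain ⟨h1, h2⟩ := this
        rw [show Nat.find hex2 - 1 + 1 = Nat.find hex2 by omega] at h1 h2
        exact ⟨h2, by omega⟩
    by_cases hs1' : s - Nat.find hex2 = 1
    · exfalso
      have hh1 := hPwS.1
      rw [hs1'] at hh1
      exact hpre (e + Nat.find hex) (by omega) hh1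
    · rcases Nat.find_spec hex2 with hL | hnotS
      · exfalso; omega
      · rw [show s - (Nat.find hex2 + 1) = s - Nat.find hex2 - 1 by omega] at hnotS
        have hsS2 : 2 ≤ s - Nat.find hex2 := by have := hPwS.2; omega
        have hrunNew : IsRun 3 w u (s - Nat.find hex2 + u.length) (e + Nat.find hex - u.length) := by
          refine ⟨by omega, by omega, by omega, ?_, ?_, ?_⟩
          · rw [show s - Nat.find hex2 + u.length - u.length = s - Nat.find hex2 by omega,
              show e + Nat.find hex - u.length + u.length = e + Nat.find hex by omega]
            exact hPwS.1
          · rw [show s - Nat.find hex2 + u.length - u.length - 1 = s - Nat.find hex2 - 1 by omega,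
              show e + Nat.find hex - u.length + u.length = e + Nat.find hex by omega]
            exact hnotS
          · rw [show s - Nat.find hex2 + u.length - u.length = s - Nat.find hex2 by omega,
              show e + Nat.find hex - u.length + u.length + 1 = e + Nat.find hex + 1 by omega]
            intro hcon
            exact hnotE (pw_mono hcon (by omega) le_rfl)
        obtain ⟨m, hm1, hIm, hJm⟩ := hf.complete _ _ hrunNew
        exact ⟨m, hm1, by omega, by omega⟩
  -- locating a position within the segments
  have hseg : ∀ n, 1 ≤ n → ∃ m, L m < n ∧ n ≤ L (m+1) := by
    intro n hn
    have hex : ∃ k, n ≤ L k := ⟨n, hLlb n⟩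
    have h1 := Nat.find_spec hex
    have hk0 : Nat.find hex ≠ 0 := by
      intro h0
      rw [h0, hL0] at h1
      omega
    have h2 := Nat.find_min hex (show Nat.find hex - 1 < Nat.find hex by omega)
    push_neg at h2
    exact ⟨Nat.find hex - 1, h2, by rw [show Nat.find hex - 1 + 1 = Nat.find hex by omega]; exact h1⟩
  -- the occurrence of T in xb leads to a contradiction
  obtain ⟨a', hLa', hia'⟩ := hseg i hi1
  by_cases hA : i + (h+2) * u.length - 1 ≤ L (a'+1)
  · -- Case A : the occurrence lies inside one segment
    have hPw := EXT a' i ((h+2) * u.length) (by omega) hLa' (by omega) le_rfl le_rfl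
    by_cases hcaseA : I (a'+1) ≤ J a' + (i - L a') + u.length
    · -- inside the reduced block : too short
      have hBh1 := hBh (a'+1) (by omega)
      have hWl := hWlen a'
      have hLr := hLrec a'
      have hJI1 := hJI a'
      omega
    · -- inside the gap before the run : build a run and contradict its position
      obtain ⟨m, hm1, hIm, hJm⟩ := CONSTR (J a' + (i - L a'))
        (J a' + (i - L a') + (h+2) * u.length - 1)
        (by omega) (by omega) hPw
      rcases le_or_gt (a'+1) m with hma | hma
      · have := hImono (a'+1) m (by omega) hma
        omega
      · have := hJmono m a' hm1 (by omega)
        omega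
  · -- Case B : the occurrence crosses a segment boundary
    push_neg at hA
    obtain ⟨b', hLb', hb'2⟩ := hseg (i + (h+2) * u.length - 1) (by omega)
    have hba : a' + 1 ≤ b' := by
      by_contra hc
      push_neg at hc
      have := hLmono (b'+1) (a'+1) (by omega)
      omega
    have hib' : i ≤ L b' := le_trans hia' (hLmono (a'+1) b' hba)
    by_cases hB1 : L b' + u.length + 1 ≤ i + (h+2) * u.length - 1
    · -- at least |u|+1 letters after the seam
      have hPw := EXT b' (L b' + 1) (u.length + 1) (by omega) (by omega)
        (by omega) (by omega) (by omega)
      rw [show J b' + (L b' + 1 - L b') = J b' + 1 by omega,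
        show J b' + 1 + (u.length + 1) - 1 = J b' + u.length + 1 by omega] at hPw
      exact run_no_right hune (hrun b' (by omega)) hPw
    · -- at most |u| letters after the seam
      push_neg at hB1
      obtain ⟨c', rfl⟩ : ∃ c', b' = c' + 1 := ⟨b' - 1, by omega⟩
      have hBh1 := hBh (c'+1) (by omega)
      have hBp1 := hBp (c'+1) (by omega)
      have hWp1 := hWp c'
      have hWl1 := hWlen c'
      have hLr1 := hLrec c'
      have hJI1 := hJI c'
      have hI2 := (hrun (c'+1) (by omega)).2.2.1
      have hPw := EXT c'
        (L (c'+1) - (fracPow (Z (c'+1)) (φ (D (c'+1)))).length - u.length)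
        (u.length + 1) (by omega) (by omega) (by omega) (by omega) (by omega)
      rw [show J c' + (L (c'+1) - (fracPow (Z (c'+1)) (φ (D (c'+1)))).length - u.length - L c')
            = I (c'+1) - u.length - 1 by omega,
        show I (c'+1) - u.length - 1 + (u.length + 1) - 1 = I (c'+1) - 1 by omega] at hPw
      exact run_no_left hune (hrun (c'+1) (by omega)) hPw
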